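/- For 0 ≤ r < 1, the supremum of |(1 - z)/(1 - r z)| over the open unit disc equals 2/(1 + r). -/

import Mathlib

open Complex Metric

/-- For `0 ≤ r < 1`, the supremum of `|(1 - z)/(1 - r z)|` over the open unit
disc equals `2/(1 + r)`. -/
theorem stmt1 (r : ℝ) (hr0 : 0 ≤ r) (hr1 : r < 1) :
    sSup ((fun z : ℂ => ‖(1 - z) / (1 - (r : ℂ) * z)‖) '' ball (0:ℂ) 1)
      = 2 / (1 + r) := by
  have hr1' : (0:ℝ) < 1 + r := by linarith
  -- Key upper bound
  have key : ∀ z : ℂ, z ∈ ball (0:ℂ) 1 →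
      ‖(1 - z) / (1 - (r : ℂ) * z)‖ ≤ 2 / (1 + r) := by
    intro z hz
    rw [mem_ball, dist_zero_right] at hz
    have hz' : ‖z‖ < 1 := by simpa using hz
    have hzsq : z.re ^ 2 + z.im ^ 2 < 1 := by
      have := Complex.sq_norm z
      rw [Complex.normSq_apply] at this
      nlinarith [norm_nonneg z]
    set a := ‖1 - z‖ with ha_def
    set b := ‖1 - (r : ℂ) * z‖ with hb_def
    have ha : 0 ≤ a := norm_nonneg _
    have hb2 : b ^ 2 = (1 - r * z.re) ^ 2 + (r * z.im) ^ 2 := by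
      rw [hb_def, Complex.sq_norm, Complex.normSq_apply]
      simp [Complex.sub_re, Complex.sub_im, Complex.mul_re, Complex.mul_im]
      ring
    have ha2 : a ^ 2 = (1 - z.re) ^ 2 + z.im ^ 2 := by
      rw [ha_def, Complex.sq_norm, Complex.normSq_apply]
      simp [Complex.sub_re, Complex.sub_im]
      ring
    have hre1 : r * z.re < 1 := by nlinarith [sq_nonneg (r - z.re)]
    have hbpos : 0 < b := by
      have hb2pos : 0 < b ^ 2 := by
        rw [hb2]
        nlinarith [sq_nonneg (r * z.im), mul_pos (sub_pos.mpr hre1) (sub_pos.mpr hre1)]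
      nlinarith [norm_nonneg (1 - (r:ℂ) * z)]
    have hsq : (1 + r) ^ 2 * a ^ 2 ≤ 4 * b ^ 2 := by
      have hident : 4 * b ^ 2 - (1 + r) ^ 2 * a ^ 2 =
          2 * (1 - r ^ 2) * (1 - (z.re ^ 2 + z.im ^ 2))
            + (1 - r) ^ 2 * ((1 + z.re) ^ 2 + z.im ^ 2) := by
        rw [hb2, ha2]; ring
      have t1 : 0 ≤ 2 * (1 - r ^ 2) * (1 - (z.re ^ 2 + z.im ^ 2)) := by
        apply mul_nonneg (by nlinarith) (by linarith)
      have t2 : 0 ≤ (1 - r) ^ 2 * ((1 + z.re) ^ 2 + z.im ^ 2) := by positivity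
      linarith
    rw [norm_div, ← ha_def, ← hb_def, div_le_div_iff₀ hbpos hr1']
    nlinarith [sq_nonneg (2 * b - a * (1 + r)), mul_pos hbpos hbpos]
  have hne : ((fun z : ℂ => ‖(1 - z) / (1 - (r : ℂ) * z)‖) '' ball (0:ℂ) 1).Nonempty := by
    exact ⟨_, ⟨0, by simp, rfl⟩⟩
  have hbdd : BddAbove ((fun z : ℂ => ‖(1 - z) / (1 - (r : ℂ) * z)‖) '' ball (0:ℂ) 1) := by
    refine ⟨2 / (1 + r), ?_⟩
    rintro x ⟨z, hz, rfl⟩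
    exact key z hz
  apply le_antisymm
  · apply csSup_le hne
    rintro x ⟨z, hz, rfl⟩
    exact key z hz
  · -- approach along z = -s, s → 1⁻
    have hcont : ContinuousAt (fun s : ℝ => (1 + s) / (1 + r * s)) 1 := by
      apply ContinuousAt.div (by fun_prop) (by fun_prop)
      simp only [mul_one]
      linarith
    have htend : Filter.Tendsto (fun s : ℝ => (1 + s) / (1 + r * s))
        (nhdsWithin 1 (Set.Iio 1)) (nhds (2 / (1 + r))) := by
      have h := hcont.tendsto.mono_left (nhdsWithin_le_nhds (s := Set.Iio 1))
      simpa [mul_one, one_add_one_eq_two] using h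
    refine le_of_tendsto htend ?_
    filter_upwards [Ioo_mem_nhdsLT_of_mem (Set.mem_Ioc.mpr ⟨(by norm_num : (0:ℝ) < 1), le_refl 1⟩)] with s hs
    obtain ⟨hs0, hs1⟩ := hs
    have hden : (0:ℝ) < 1 + r * s := by nlinarith
    have hval : ‖(1 - (-(s:ℂ))) / (1 - (r : ℂ) * (-(s:ℂ)))‖
        = (1 + s) / (1 + r * s) := by
      have heq : (1 - (-(s:ℂ))) / (1 - (r : ℂ) * (-(s:ℂ)))
          = (((1 + s) / (1 + r * s) : ℝ) : ℂ) := by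
        have hden' : ((1 + r * s : ℝ) : ℂ) ≠ 0 := by
          exact_mod_cast ne_of_gt hden
        push_cast
        field_simp
        ring
      rw [heq, Complex.norm_real, Real.norm_eq_abs, abs_of_pos (div_pos (by linarith) hden)]
    have hmem : (-(s:ℂ)) ∈ ball (0:ℂ) 1 := by
      rw [mem_ball, dist_zero_right, norm_neg,
        Complex.norm_real, Real.norm_eq_abs, _root_.abs_of_nonneg hs0.le]
      exact hs1
    calc (1 + s) / (1 + r * s) = ‖(1 - (-(s:ℂ))) / (1 - (r : ℂ) * (-(s:ℂ)))‖ :=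
          hval.symm
      _ ≤ sSup _ := le_csSup hbdd ⟨-(s:ℂ), hmem, rfl⟩
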